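/- Let v, d : ℕ → ℤ-valued double sequences with: 13^max(0, ⌊(13r-2)/14⌋) divides v r for all r ≥ 1, and 13^max(0, ⌊(13j-r-8)/14⌋) divides d r j for all r, j ≥ 1. Fix N ≥ 1 and define w j = Σ_{r=1}^{N} (v r) * (d r j). Then 13^max(0, ⌊(13j-9)/14⌋) divides w j for every j ≥ 1. -/
import Mathlib

lemma stmt16_key (r j : ℤ) (hr : 1 ≤ r) (hj : 1 ≤ j) :
    (max 0 ((13 * j - 9).fdiv 14)).toNat ≤
      (max 0 ((13 * r - 2).fdiv 14)).toNat + (max 0 ((13 * j - r - 8).fdiv 14)).toNat := by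
  rw [Int.fdiv_eq_ediv_of_nonneg _ (by norm_num), Int.fdiv_eq_ediv_of_nonneg _ (by norm_num),
    Int.fdiv_eq_ediv_of_nonneg _ (by norm_num)]
  omega

theorem stmt16 (v : ℕ → ℤ) (d : ℕ → ℕ → ℤ)
    (hv : ∀ r : ℕ, 1 ≤ r → (13:ℤ)^((max 0 ((13 * (r:ℤ) - 2).fdiv 14)).toNat) ∣ v r)
    (hd : ∀ r j : ℕ, 1 ≤ r → 1 ≤ j →
      (13:ℤ)^((max 0 ((13 * (j:ℤ) - r - 8).fdiv 14)).toNat) ∣ d r j)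
    (N : ℕ) (hN : 1 ≤ N) :
    ∀ j : ℕ, 1 ≤ j →
      (13:ℤ)^((max 0 ((13 * (j:ℤ) - 9).fdiv 14)).toNat) ∣
        ∑ r ∈ Finset.Icc 1 N, (v r) * (d r j) := by
  intro j hj
  refine Finset.dvd_sum fun r hr => ?_
  have hr1 : 1 ≤ r := (Finset.mem_Icc.mp hr).1
  have key := stmt16_key r j (by exact_mod_cast hr1) (by exact_mod_cast hj)
  calc (13:ℤ)^((max 0 ((13 * (j:ℤ) - 9).fdiv 14)).toNat)
      ∣ (13:ℤ)^((max 0 ((13 * (r:ℤ) - 2).fdiv 14)).toNat) *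
        (13:ℤ)^((max 0 ((13 * (j:ℤ) - r - 8).fdiv 14)).toNat) := by
        rw [← pow_add]; exact pow_dvd_pow _ key
    _ ∣ v r * d r j := mul_dvd_mul (hv r hr1) (hd r j hr1 hj)
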